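/- Let E and k be natural numbers with 2 ≤ k ≤ E. Then, as an identity of integers, ∑_{i=1}^{k−2} (−1)^{k−i} · C(E, i) · C(E−i−1, k−i) = 1 − (−1)^k·C(E−1, k) + (E−k)·C(E, k−1) − C(E, k). -/

import Mathlib

open PowerSeries Finset

lemma coeff_one_sub_X_pow (E n : ℕ) :
    PowerSeries.coeff (R := ℤ) n ((1 - PowerSeries.X) ^ E) = (-1) ^ n * E.choose n := by
  induction E generalizing n with
  | zero => cases n <;> simp
  | succ E ih =>
    rw [pow_succ, mul_sub, mul_one, map_sub]
    cases n with
    | zero =>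
      simp [ih, coeff_zero_eq_constantCoeff, map_mul]
    | succ n =>
      rw [mul_comm _ X, PowerSeries.coeff_succ_X_mul, ih, ih,
        Nat.choose_succ_succ]
      push_cast
      ring

lemma key_sum (m k : ℕ) :
    ∑ i ∈ Finset.range (k + 1),
      (-1 : ℤ) ^ i * ((k + m + 1).choose i) * ((m + (k - i)).choose m) = (-1) ^ k := by
  have h1 : ((1 - X) ^ (k + m + 1) : ℤ⟦X⟧) * (invOneSubPow ℤ (m + 1)).val
      = (1 - X) ^ k := by
    rw [show k + m + 1 = k + (m + 1) by ring, pow_add, mul_assoc,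
      ← invOneSubPow_inv_eq_one_sub_pow ℤ (m + 1), (invOneSubPow ℤ (m + 1)).inv_val, mul_one]
  have h2 := congrArg (PowerSeries.coeff (R := ℤ) k) h1
  rw [coeff_mul, invOneSubPow_val_succ_eq_mk_add_choose,
    Finset.Nat.sum_antidiagonal_eq_sum_range_succ_mk, coeff_one_sub_X_pow] at h2
  simp only [coeff_one_sub_X_pow, coeff_mk, Nat.choose_self] at h2
  simpa using h2

lemma key_sum' (m k : ℕ) :
    ∑ i ∈ Finset.range (k + 1),
      (-1 : ℤ) ^ (k - i) * ((k + m + 1).choose i) * ((k + m + 1 - i - 1).choose (k - i)) = 1 := by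
  have h := key_sum m k
  have hsq : ((-1 : ℤ) ^ k) * ((-1 : ℤ) ^ k) = 1 := by
    rw [← pow_add, ← two_mul, pow_mul]; norm_num
  calc ∑ i ∈ Finset.range (k + 1),
        (-1 : ℤ) ^ (k - i) * ((k + m + 1).choose i) * ((k + m + 1 - i - 1).choose (k - i))
      = ∑ i ∈ Finset.range (k + 1),
        (-1 : ℤ) ^ k * ((-1 : ℤ) ^ i * ((k + m + 1).choose i) * ((m + (k - i)).choose m)) := by
        apply Finset.sum_congr rfl
        intro i hi
        simp only [Finset.mem_range] at hi
        have hik : i ≤ k := by omega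
        have e1 : k + m + 1 - i - 1 = m + (k - i) := by omega
        have e2 : (m + (k - i)).choose (k - i) = (m + (k - i)).choose m := by
          rw [← Nat.choose_symm (Nat.le_add_left (k - i) m)]
          congr 1
          omega
        have e3 : (-1 : ℤ) ^ (k - i) = (-1) ^ k * (-1) ^ i := by
          rw [← pow_add, show k + i = (k - i) + 2 * i by omega, pow_add, pow_mul]
          norm_num
        rw [e1, e2, e3]
        ring
    _ = (-1 : ℤ) ^ k * ∑ i ∈ Finset.range (k + 1),
          (-1 : ℤ) ^ i * ((k + m + 1).choose i) * ((m + (k - i)).choose m) := by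
        rw [Finset.mul_sum]
    _ = 1 := by rw [h, hsq]

lemma split_sum (g : ℕ → ℤ) (j : ℕ) :
    ∑ i ∈ Finset.range (j + 3), g i
      = g 0 + (∑ i ∈ Finset.Icc 1 j, g i) + g (j + 1) + g (j + 2) := by
  rw [Finset.sum_range_succ, Finset.sum_range_succ, Finset.sum_range_succ']
  have h : ∑ i ∈ Finset.Icc 1 j, g i = ∑ i ∈ Finset.range j, g (1 + i) := by
    rw [← Finset.Ico_add_one_right_eq_Icc, Finset.sum_Ico_eq_sum_range]
    simp
  have h2 : ∑ i ∈ Finset.range j, g (1 + i) = ∑ i ∈ Finset.range j, g (i + 1) := by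
    apply Finset.sum_congr rfl
    intro i _
    rw [Nat.add_comm]
  rw [h, h2]
  ring


/-- The intermediate identity in the proof of the paper's Lemma 4:
`∑_{i=1}^{k−2} (−1)^{k−i}·C(E,i)·C(E−i−1, k−i)
  = 1 − (−1)^k·C(E−1,k) + (E−k)·C(E,k−1) − C(E,k)`. -/
theorem lemma4_intermediate (E k : ℕ) (h2 : 2 ≤ k) (hkE : k ≤ E) :
    ∑ i ∈ Finset.Icc 1 (k - 2),
        (-1 : ℤ) ^ (k - i) * (E.choose i) * ((E - i - 1).choose (k - i))
      = 1 - (-1 : ℤ) ^ k * ((E - 1).choose k) + ((E : ℤ) - k) * (E.choose (k - 1))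
        - (E.choose k) := by
  rcases eq_or_lt_of_le hkE with rfl | hlt
  · -- k = E case
    have hz : ∀ i ∈ Finset.Icc 1 (k - 2),
        (-1 : ℤ) ^ (k - i) * (k.choose i) * ((k - i - 1).choose (k - i)) = 0 := by
      intro i hi
      simp only [Finset.mem_Icc] at hi
      rw [Nat.choose_eq_zero_of_lt (show k - i - 1 < k - i by omega)]
      push_cast; ring
    rw [Finset.sum_eq_zero hz, Nat.choose_self,
      Nat.choose_eq_zero_of_lt (show k - 1 < k by omega)]
    push_cast; ring
  · obtain ⟨m, rfl⟩ : ∃ m, E = k + m + 1 := ⟨E - k - 1, by omega⟩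
    obtain ⟨j, rfl⟩ : ∃ j, k = j + 2 := ⟨k - 2, by omega⟩
    have H := key_sum' m (j + 2)
    rw [show j + 2 + 1 = j + 3 from rfl, split_sum] at H
    have e1 : j + 2 - 2 = j := by omega
    have e2 : j + 2 - 0 = j + 2 := by omega
    have e3 : j + 2 - (j + 1) = 1 := by omega
    have e4 : j + 2 - (j + 2) = 0 := by omega
    have e5 : j + 2 + m + 1 - (j + 1) - 1 = m + 1 := by omega
    have e6 : j + 2 + m + 1 - 0 - 1 = j + 2 + m + 1 - 1 := by omega
    have e7 : j + 2 - 1 = j + 1 := by omega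
    rw [e2, e3, e4, e5, e6] at H
    simp only [Nat.choose_zero_right, Nat.choose_one_right, Nat.cast_one, one_mul, mul_one,
      pow_zero, pow_one] at H
    rw [e1, e7]
    push_cast at H ⊢
    linarith [H]
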